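/- A surjective function φ : [1]^m → [1] that preserves binary joins and is interval-preserving is of the form φ(x) = ⋁_{i ∈ I} x_i for some nonempty subset I ⊆ {1,...,m}. -/

import Mathlib

/-- A function between preorders is interval-preserving if the image of every
(nonempty) interval is an interval. -/
def IsIntervalPreserving {α β : Type*} [Preorder α] [Preorder β] (f : α → β) : Prop :=
  ∀ p q : α, p ≤ q → ∃ a b : β, f '' Set.Icc p q = Set.Icc a b

lemma phi_finset_sup {m : ℕ} {ι : Type*} (φ : (Fin m → Bool) → Bool)
    (hjoin : ∀ x y, φ (x ⊔ y) = φ x ⊔ φ y) (hbot : φ ⊥ = ⊥) :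
    ∀ (s : Finset ι) (f : ι → (Fin m → Bool)), φ (s.sup f) = s.sup (fun i => φ (f i)) := by
  classical
  intro s f
  induction s using Finset.induction_on with
  | empty => simpa using hbot
  | insert _ _ h ih => rw [Finset.sup_insert, Finset.sup_insert, hjoin, ih]

/-- A surjective function `φ : [1]^m → [1]` preserving binary joins and
intervals is of the form `φ x = ⋁_{i ∈ I} x i` for some nonempty `I ⊆ {1,…,m}`. -/
theorem stmt_13 {m : ℕ} (φ : (Fin m → Bool) → Bool) (hs : Function.Surjective φ)
    (hjoin : ∀ x y, φ (x ⊔ y) = φ x ⊔ φ y) (hip : IsIntervalPreserving φ) :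
    ∃ I : Finset (Fin m), I.Nonempty ∧ ∀ x, φ x = I.sup x := by
  classical
  have mono : Monotone φ := by
    intro a b hab
    have h := hjoin a b
    rw [sup_eq_right.mpr hab] at h
    exact h ▸ le_sup_left
  have hbot : φ ⊥ = ⊥ := by
    obtain ⟨a, ha⟩ := hs false
    have := mono (bot_le : ⊥ ≤ a)
    rw [ha] at this
    exact le_bot_iff.mp this
  set e : Fin m → (Fin m → Bool) := fun i j => decide (j = i) with he
  -- decomposition of x as a finite sup
  have hdecomp : ∀ x : Fin m → Bool,
      x = Finset.univ.sup (fun i => (fun j => x i && decide (j = i))) := by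
    intro x
    funext j
    rw [Finset.sup_apply]
    cases hxj : x j
    · symm
      refine le_bot_iff.mp (Finset.sup_le ?_)
      intro i _
      by_cases hij : j = i
      · subst hij; simp [hxj]
      · simp [hij]
    · symm
      refine top_le_iff.mp ?_
      calc (⊤ : Bool) = (x j && decide (j = j)) := by simp [hxj]
        _ ≤ _ := Finset.le_sup (f := fun i => x i && decide (j = i)) (Finset.mem_univ j)
  have key : ∀ x : Fin m → Bool,
      φ x = Finset.univ.sup (fun i => φ (fun j => x i && decide (j = i))) := by
    intro x
    conv_lhs => rw [hdecomp x]
    exact phi_finset_sup φ hjoin hbot _ _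
  have hterm : ∀ (x : Fin m → Bool) (i : Fin m),
      φ (fun j => x i && decide (j = i)) = (x i && φ (e i)) := by
    intro x i
    cases hxi : x i
    · simpa using (show φ (fun _ => false) = false from hbot)
    · simp [he]
  refine ⟨Finset.univ.filter (fun i => φ (e i) = true), ?_, ?_⟩
  · -- nonempty: otherwise φ is constantly false, contradicting surjectivity
    by_contra hempty
    rw [Finset.not_nonempty_iff_eq_empty, Finset.filter_eq_empty_iff] at hempty
    obtain ⟨a, ha⟩ := hs true
    have : φ a = false := by
      rw [key a]
      refine le_bot_iff.mp (Finset.sup_le ?_)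
      intro i _
      rw [hterm a i]
      have hfe : φ (e i) = false := by
        have := hempty (Finset.mem_univ i)
        simpa using this
      simp [hfe]
    rw [ha] at this; exact absurd this (by simp)
  · intro x
    rw [key x, Bool.eq_iff_iff]
    constructor
    · intro h
      have hex : ∃ i ∈ Finset.univ, (φ (fun j => x i && decide (j = i))) = true := by
        by_contra hc
        push_neg at hc
        have hfalse : Finset.univ.sup (fun i => φ (fun j => x i && decide (j = i))) = false := by
          refine le_bot_iff.mp (Finset.sup_le ?_)
          intro i hi
          simp [Bool.eq_false_iff.mpr (fun hh => (hc i hi) hh)]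
        rw [hfalse] at h; exact absurd h (by simp)
      obtain ⟨i, _, hi⟩ := hex
      rw [hterm x i, Bool.and_eq_true] at hi
      have himem : i ∈ Finset.univ.filter (fun i => φ (e i) = true) := by
        simp [hi.2]
      refine top_le_iff.mp ?_
      calc (⊤ : Bool) = x i := hi.1.symm
        _ ≤ _ := Finset.le_sup himem
    · intro h
      have hex : ∃ i ∈ Finset.univ.filter (fun i => φ (e i) = true), x i = true := by
        by_contra hc
        push_neg at hc
        have hfalse : (Finset.univ.filter (fun i => φ (e i) = true)).sup x = false := by
          refine le_bot_iff.mp (Finset.sup_le ?_)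
          intro i hi
          simp [Bool.eq_false_iff.mpr (fun hh => (hc i hi) hh)]
        rw [hfalse] at h; exact absurd h (by simp)
      obtain ⟨i, himem, hxi⟩ := hex
      have hei : φ (e i) = true := by simpa using (Finset.mem_filter.mp himem).2
      refine top_le_iff.mp ?_
      calc (⊤ : Bool) = (x i && φ (e i)) := by simp [hxi, hei]
        _ = φ (fun j => x i && decide (j = i)) := (hterm x i).symm
        _ ≤ _ := Finset.le_sup (f := fun i => φ (fun j => x i && decide (j = i)))
              (Finset.mem_univ i)
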